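/- Let $d \geq 4$ be a power of two, and let $B_1$ be the set of $d \times d$ matrices obtained as $k$-fold tensor products of the $2\times 2$ matrices $\{I, X, Z, XZ\}$ (where $d = 2^k$). Then $B_1$ is not equivalent to the clock-and-shift basis $B_2 = \{X_d^a Z_d^b\}$: there do not exist unitaries $V, W$ on $\mathbb{C}^d$ and unit complex numbers $\alpha_i$ with $B_2 = \{\alpha_i V U_i W : U_i \in B_1\}$. -/

import Mathlib

/-- The shift operator `X_d` on `ℂ^d`. -/
noncomputable def shift (d : ℕ) : Matrix (Fin d) (Fin d) ℂ :=
  Matrix.of fun i j => if (i : ℕ) = ((j : ℕ) + 1) % d then 1 else 0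

/-- A primitive `d`-th root of unity. -/
noncomputable def omega (d : ℕ) : ℂ := Complex.exp (2 * Real.pi * Complex.I / d)

/-- The clock operator `Z_d` on `ℂ^d`. -/
noncomputable def clock (d : ℕ) : Matrix (Fin d) (Fin d) ℂ :=
  Matrix.diagonal fun k => omega d ^ (k : ℕ)

/-- `k`-fold Kronecker (tensor) product of `2×2` matrices, as a matrix indexed by
`Fin k → Fin 2`. -/
def kron (k : ℕ) (f : Fin k → Matrix (Fin 2) (Fin 2) ℂ) :
    Matrix (Fin k → Fin 2) (Fin k → Fin 2) ℂ :=
  Matrix.of fun i j => ∏ t, f t (i t) (j t)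

lemma kron_mul {k : ℕ} (f g : Fin k → Matrix (Fin 2) (Fin 2) ℂ) :
    kron k f * kron k g = kron k (fun t => f t * g t) := by
  ext i j
  simp only [kron, Matrix.mul_apply, Matrix.of_apply]
  rw [show (∏ t, ∑ v, f t (i t) v * g t v (j t)) =
      ∑ x ∈ Fintype.piFinset (fun _ : Fin k => (Finset.univ : Finset (Fin 2))),
        ∏ t, f t (i t) (x t) * g t (x t) (j t) from Finset.prod_univ_sum _ _,
    Fintype.piFinset_univ]
  exact Finset.sum_congr rfl fun x _ => (Finset.prod_mul_distrib).symm

lemma kron_smul_one {k : ℕ} (c : Fin k → ℂ) :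
    kron k (fun t => c t • (1 : Matrix (Fin 2) (Fin 2) ℂ)) = (∏ t, c t) • 1 := by
  ext i j
  by_cases h : i = j
  · subst h
    simp [kron, Matrix.one_apply, Finset.prod_mul_distrib]
  · obtain ⟨t, ht⟩ : ∃ t, i t ≠ j t := by
      by_contra hc; push_neg at hc; exact h (funext hc)
    have hz : (c t • (1 : Matrix (Fin 2) (Fin 2) ℂ)) (i t) (j t) = 0 := by
      simp [Matrix.one_apply_ne ht]
    rw [show kron k (fun t => c t • (1 : Matrix (Fin 2) (Fin 2) ℂ)) i j
        = ∏ s, (c s • (1 : Matrix (Fin 2) (Fin 2) ℂ)) (i s) (j s) from rfl,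
      Finset.prod_eq_zero (Finset.mem_univ t) hz]
    simp [Matrix.one_apply_ne h]

set_option linter.unusedTactic false in
lemma pauliPairSq {A B : Matrix (Fin 2) (Fin 2) ℂ}
    (hA : A ∈ ({1, !![(0:ℂ), 1; 1, 0], !![(1:ℂ), 0; 0, -1],
        !![(0:ℂ), 1; 1, 0] * !![(1:ℂ), 0; 0, -1]} : Set (Matrix (Fin 2) (Fin 2) ℂ)))
    (hB : B ∈ ({1, !![(0:ℂ), 1; 1, 0], !![(1:ℂ), 0; 0, -1],
        !![(0:ℂ), 1; 1, 0] * !![(1:ℂ), 0; 0, -1]} : Set (Matrix (Fin 2) (Fin 2) ℂ))) :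
    ∃ c : ℂ, c * c = 1 ∧ (A * B) * (A * B) = c • 1 := by
  simp only [Set.mem_insert_iff, Set.mem_singleton_iff] at hA hB
  rcases hA with h|h|h|h <;> rcases hB with h'|h'|h'|h' <;> subst h <;> subst h' <;>
    first
      | (refine ⟨1, by norm_num, ?_⟩; ext i j; fin_cases i <;> fin_cases j <;>
          norm_num [Matrix.mul_apply, Fin.sum_univ_two, Matrix.one_apply, Matrix.smul_apply]; done)
      | (refine ⟨-1, by norm_num, ?_⟩; ext i j; fin_cases i <;> fin_cases j <;>
          norm_num [Matrix.mul_apply, Fin.sum_univ_two, Matrix.one_apply, Matrix.smul_apply]; done)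


/-- For `d = 2^k ≥ 4`, the basis of `k`-fold tensor products of `{I, X, Z, XZ}` is not
equivalent (via `Uᵢ ↦ αᵢ V Uᵢ W` with `V, W` unitary and `|αᵢ| = 1`) to the
`d`-dimensional clock-and-shift basis. -/
theorem stmt9 (k : ℕ) (hk : 2 ≤ k) (e : (Fin k → Fin 2) ≃ Fin (2 ^ k)) :
    ¬ ∃ V ∈ Matrix.unitaryGroup (Fin (2 ^ k)) ℂ,
      ∃ W ∈ Matrix.unitaryGroup (Fin (2 ^ k)) ℂ,
      {A : Matrix (Fin (2 ^ k)) (Fin (2 ^ k)) ℂ |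
          ∃ a b : Fin (2 ^ k), A = shift (2 ^ k) ^ (a : ℕ) * clock (2 ^ k) ^ (b : ℕ)}
        = {A : Matrix (Fin (2 ^ k)) (Fin (2 ^ k)) ℂ |
            ∃ f : Fin k → Matrix (Fin 2) (Fin 2) ℂ,
              (∀ t, f t ∈ ({1, !![(0:ℂ), 1; 1, 0], !![(1:ℂ), 0; 0, -1],
                  !![(0:ℂ), 1; 1, 0] * !![(1:ℂ), 0; 0, -1]} :
                    Set (Matrix (Fin 2) (Fin 2) ℂ))) ∧
              ∃ α : ℂ, ‖α‖ = 1 ∧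
                A = α • (V * Matrix.reindex e e (kron k f) * W)} := by
  rintro ⟨V, hV, W, hW, hset⟩
  have hd4 : 4 ≤ 2 ^ k := by
    calc 4 = 2 ^ 2 := by norm_num
    _ ≤ 2 ^ k := Nat.pow_le_pow_right (by norm_num) hk
  have hd0 : 0 < 2 ^ k := by positivity
  have h1lt : 1 < 2 ^ k := by omega
  have hclock : clock (2 ^ k) ∈ {A : Matrix (Fin (2 ^ k)) (Fin (2 ^ k)) ℂ |
      ∃ a b : Fin (2 ^ k), A = shift (2 ^ k) ^ (a : ℕ) * clock (2 ^ k) ^ (b : ℕ)} :=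
    ⟨⟨0, hd0⟩, ⟨1, h1lt⟩, by simp⟩
  have hone : (1 : Matrix (Fin (2 ^ k)) (Fin (2 ^ k)) ℂ) ∈ {A : Matrix (Fin (2 ^ k)) (Fin (2 ^ k)) ℂ |
      ∃ a b : Fin (2 ^ k), A = shift (2 ^ k) ^ (a : ℕ) * clock (2 ^ k) ^ (b : ℕ)} :=
    ⟨⟨0, hd0⟩, ⟨0, hd0⟩, by simp⟩
  rw [hset] at hclock hone
  obtain ⟨f, hf, α, hα, h1⟩ := hclock
  obtain ⟨g, hg, β, hβ, h2⟩ := hone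
  have hβ0 : β ≠ 0 := by intro h; rw [h] at hβ; simp at hβ
  have honeS : (1 : Matrix (Fin 2) (Fin 2) ℂ) ∈ ({1, !![(0:ℂ), 1; 1, 0], !![(1:ℂ), 0; 0, -1],
      !![(0:ℂ), 1; 1, 0] * !![(1:ℂ), 0; 0, -1]} : Set (Matrix (Fin 2) (Fin 2) ℂ)) :=
    Set.mem_insert _ _
  have hgg : ∀ t, ∃ c : ℂ, c * c = 1 ∧ g t * g t = c • 1 := fun t => by
    simpa using pauliPairSq (hg t) honeS
  choose cg hcg1 hcg2 using hgg
  have hfg : ∀ t, ∃ c : ℂ, c * c = 1 ∧ (f t * g t) * (f t * g t) = c • 1 := fun t =>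
    pauliPairSq (hf t) (hg t)
  choose c hc1 hc2 using hfg
  set M := Matrix.reindex e e (kron k f) with hM
  set N := Matrix.reindex e e (kron k g) with hN
  have hRmul : ∀ A B : Matrix (Fin k → Fin 2) (Fin k → Fin 2) ℂ,
      Matrix.reindex e e A * Matrix.reindex e e B = Matrix.reindex e e (A * B) := fun A B => by
    simp [Matrix.reindex_apply, Matrix.submatrix_mul_equiv]
  have hRsmulone : ∀ γ : ℂ, Matrix.reindex e e (γ • (1 : Matrix (Fin k → Fin 2) (Fin k → Fin 2) ℂ))
      = γ • 1 := fun γ => by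
    simp [Matrix.reindex_apply, Matrix.submatrix_smul, Matrix.submatrix_one_equiv]
  set eg := ∏ t, cg t with heg
  have heg2 : eg * eg = 1 := by
    rw [heg, ← Finset.prod_mul_distrib]
    simp [hcg1]
  have hNN : N * N = eg • 1 := by
    rw [hN, hRmul, kron_mul, show (fun t => g t * g t) = fun t => cg t • (1 : Matrix (Fin 2) (Fin 2) ℂ)
      from funext hcg2, kron_smul_one, hRsmulone]
  have hMN : (M * N) * (M * N) = (∏ t, c t) • 1 := by
    rw [hM, hN, hRmul, hRmul, kron_mul, kron_mul,
      show (fun t => (f t * g t) * (f t * g t)) = fun t => c t • (1 : Matrix (Fin 2) (Fin 2) ℂ)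
        from funext hc2, kron_smul_one, hRsmulone]
  have hVsV : V * star V = 1 := (Matrix.mem_unitaryGroup_iff).mp hV
  have hsVV : star V * V = 1 := (Matrix.mem_unitaryGroup_iff').mp hV
  have hVNW : V * (N * W) = β⁻¹ • 1 := by
    rw [h2, smul_smul, inv_mul_cancel₀ hβ0, one_smul, Matrix.mul_assoc]
  have hNW : N * W = β⁻¹ • star V := by
    calc N * W = (star V * V) * (N * W) := by rw [hsVV, Matrix.one_mul]
    _ = star V * (V * (N * W)) := by rw [Matrix.mul_assoc]
    _ = star V * (β⁻¹ • 1) := by rw [hVNW]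
    _ = β⁻¹ • star V := by rw [Matrix.mul_smul, Matrix.mul_one]
  have hWeq : W = (eg * β⁻¹) • (N * star V) := by
    calc W = (eg • (N * N)) * W := by rw [hNN, smul_smul, heg2, one_smul, Matrix.one_mul]
    _ = eg • (N * (N * W)) := by rw [Matrix.smul_mul, Matrix.mul_assoc]
    _ = eg • (N * (β⁻¹ • star V)) := by rw [hNW]
    _ = (eg * β⁻¹) • (N * star V) := by rw [Matrix.mul_smul, smul_smul]
  have hclockEq : clock (2 ^ k) = (α * (eg * β⁻¹)) • (V * (M * N) * star V) := by
    rw [h1, hWeq]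
    rw [Matrix.mul_smul, smul_smul]
    congr 1
    rw [Matrix.mul_assoc, Matrix.mul_assoc, Matrix.mul_assoc]
  set γ := α * (eg * β⁻¹) with hγ
  have hX : (V * (M * N) * star V) * (V * (M * N) * star V) = (∏ t, c t) • 1 := by
    calc (V * (M * N) * star V) * (V * (M * N) * star V)
        = V * ((M * N) * ((star V * V) * ((M * N) * star V))) := by
          simp only [Matrix.mul_assoc]
    _ = V * ((M * N) * ((M * N) * star V)) := by rw [hsVV, Matrix.one_mul]
    _ = V * ((M * N) * (M * N)) * star V := by simp only [Matrix.mul_assoc]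
    _ = (∏ t, c t) • (V * star V) := by
          rw [hMN, Matrix.mul_smul, Matrix.smul_mul, Matrix.mul_one]
    _ = (∏ t, c t) • 1 := by rw [hVsV]
  have hsq : clock (2 ^ k) * clock (2 ^ k) = (γ * (γ * ∏ t, c t)) • 1 := by
    rw [hclockEq, Matrix.smul_mul, Matrix.mul_smul, hX, smul_smul, smul_smul, mul_assoc]
  have hdiag : clock (2 ^ k) * clock (2 ^ k)
      = Matrix.diagonal (fun j : Fin (2 ^ k) => omega (2 ^ k) ^ (j : ℕ) * omega (2 ^ k) ^ (j : ℕ)) := by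
    rw [clock, Matrix.diagonal_mul_diagonal]
  have h00 : (1 : ℂ) = γ * (γ * ∏ t, c t) := by
    have := congrFun (congrFun (hdiag ▸ hsq) ⟨0, hd0⟩) ⟨0, hd0⟩
    simpa [Matrix.diagonal_apply_eq, Matrix.smul_apply, Matrix.one_apply] using this
  have h11 : omega (2 ^ k) * omega (2 ^ k) = γ * (γ * ∏ t, c t) := by
    have := congrFun (congrFun (hdiag ▸ hsq) ⟨1, h1lt⟩) ⟨1, h1lt⟩
    simpa [Matrix.diagonal_apply_eq, Matrix.smul_apply, Matrix.one_apply] using this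
  have homega : omega (2 ^ k) * omega (2 ^ k) = 1 := by rw [h11, ← h00]
  have hexp : Complex.exp (2 * Real.pi * Complex.I / ((2 ^ k : ℕ) : ℂ)
      + 2 * Real.pi * Complex.I / ((2 ^ k : ℕ) : ℂ)) = 1 := by
    rw [Complex.exp_add]; exact homega
  obtain ⟨n, hn⟩ := Complex.exp_eq_one_iff.mp hexp
  have hIpi : (2 * Real.pi * Complex.I : ℂ) ≠ 0 := by
    refine mul_ne_zero (mul_ne_zero two_ne_zero ?_) Complex.I_ne_zero
    exact_mod_cast Real.pi_ne_zero
  have hdC : ((2 ^ k : ℕ) : ℂ) ≠ 0 := Nat.cast_ne_zero.mpr (by omega)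
  have hcl : ((2 : ℂ) / ((2 ^ k : ℕ) : ℂ)) * (2 * Real.pi * Complex.I)
      = (n : ℂ) * (2 * Real.pi * Complex.I) := by
    rw [← hn]; field_simp; ring
  have h3 : (2 : ℂ) / ((2 ^ k : ℕ) : ℂ) = n := mul_right_cancel₀ hIpi hcl
  have h2eq : (2 : ℂ) = n * (2 : ℂ) ^ k := by
    field_simp at h3
    rw [mul_comm]
    exact_mod_cast h3
  have h2eqZ : (2 : ℤ) = n * (2 : ℤ) ^ k := by exact_mod_cast h2eq
  have hdvd : ((2 : ℤ) ^ k) ∣ 2 := Dvd.intro_left n h2eqZ.symm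
  have hle : (2 : ℤ) ^ k ≤ 2 := Int.le_of_dvd (by norm_num) hdvd
  have hge : (4 : ℤ) ≤ (2 : ℤ) ^ k := by exact_mod_cast hd4
  omega
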